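/- For the 2×2 linear recurrence [e_{k+1}; I_{k+1}] = [[a, −b],[a, 1−b]]·[e_k; I_k] with a = 1 − C·K_p, b = C·K_i, if a² < 1 − b and 0 < b < 1, then the Lyapunov function V_k = e_k² + (b/(1−b))·I_k² is strictly decreasing along nonzero trajectories, with V_{k+1} − V_k = (1/(1−b))·[e_k²(a² − (1−b)) − b²·I_k²]. -/
import Mathlib


theorem stmt_8 (C Kp Ki : ℝ) (hC : 0 < C) (hKp : 0 < Kp) (hKi : 0 < Ki)
    (a b : ℝ) (ha : a = 1 - C * Kp) (hb : b = C * Ki)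
    (hstab : a ^ 2 < 1 - b) (hb' : 0 < b ∧ b < 1)
    (e I : ℕ → ℝ)
    (hrec_e : ∀ k, e (k + 1) = a * e k - b * I k)
    (hrec_I : ∀ k, I (k + 1) = a * e k + (1 - b) * I k)
    (V : ℕ → ℝ) (hV : ∀ k, V k = (e k) ^ 2 + (b / (1 - b)) * (I k) ^ 2) :
    (∀ k, V (k + 1) - V k
        = (1 / (1 - b)) * ((e k) ^ 2 * (a ^ 2 - (1 - b)) - b ^ 2 * (I k) ^ 2)) ∧
    (∀ k, (e k, I k) ≠ (0, 0) → V (k + 1) < V k) := by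
  obtain ⟨hb0, hb1⟩ := hb'
  have h1b : (0:ℝ) < 1 - b := by linarith
  have key : ∀ k, V (k + 1) - V k
      = (1 / (1 - b)) * ((e k) ^ 2 * (a ^ 2 - (1 - b)) - b ^ 2 * (I k) ^ 2) := by
    intro k
    rw [hV, hV, hrec_e, hrec_I]
    field_simp
    ring
  refine ⟨key, fun k hne => ?_⟩
  have hlt : V (k + 1) - V k < 0 := by
    rw [key k]
    have hpos : 0 < 1 / (1 - b) := by positivity
    have h1 : (e k) ^ 2 * (a ^ 2 - (1 - b)) - b ^ 2 * (I k) ^ 2 < 0 := by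
      rcases eq_or_ne (e k) 0 with he | he
      · have hI : I k ≠ 0 := by
          intro hI; exact hne (by simp [he, hI])
        have : 0 < (I k) ^ 2 := by positivity
        rw [he]
        nlinarith [mul_pos (pow_pos hb0 2) this]
      · have : 0 < (e k) ^ 2 := by positivity
        nlinarith [sq_nonneg (I k)]
    exact mul_neg_of_pos_of_neg hpos h1
  linarith
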